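/- Thin tunnel example: For δ > 0 and σ ∈ (0, π/2), define y : (0,1)×(1/2, 1/2+δ) → ℝ² by y(x₁,x₂) = ((x₂ - 1/2) + 1/σ)(sin(σx₁), cos(σx₁)). Then dist²(∇y(x), SO(2)) = σ²(x₂ - 1/2)² for all x in the domain, and consequently ∫_{(0,1)×(1/2,1/2+δ)} dist²(∇y, SO(2)) dx = σ² δ³ / 3. -/

import Mathlib

open Real Set MeasureTheory

/-- The Frobenius norm of a real `d × d` matrix. -/
noncomputable def frob {d : ℕ} (F : Matrix (Fin d) (Fin d) ℝ) : ℝ :=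
  Real.sqrt (∑ i, ∑ j, (F i j)^2)

/-- The special orthogonal group `SO(d)` as a set of matrices. -/
def SOd (d : ℕ) : Set (Matrix (Fin d) (Fin d) ℝ) :=
  {R | R.transpose * R = 1 ∧ R.det = 1}

/-- The Frobenius distance of a matrix to `SO(d)`. -/
noncomputable def distSO {d : ℕ} (F : Matrix (Fin d) (Fin d) ℝ) : ℝ :=
  sInf ((fun R => frob (F - R)) '' SOd d)

/-- The thin-tunnel bending deformation
`y(x₁,x₂) = ((x₂ − 1/2) + 1/σ)(sin(σx₁), cos(σx₁))`. -/
noncomputable def ytunnel (σ : ℝ) (p : ℝ × ℝ) : ℝ × ℝ :=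
  ((p.2 - 1/2 + 1/σ) * Real.sin (σ * p.1), (p.2 - 1/2 + 1/σ) * Real.cos (σ * p.1))

/-- The gradient matrix `∇y(p)` of a map `y : ℝ² → ℝ²`. -/
noncomputable def gradMat (y : ℝ × ℝ → ℝ × ℝ) (p : ℝ × ℝ) : Matrix (Fin 2) (Fin 2) ℝ :=
  !![(fderiv ℝ y p ((1:ℝ), (0:ℝ))).1, (fderiv ℝ y p ((0:ℝ), (1:ℝ))).1;
     (fderiv ℝ y p ((1:ℝ), (0:ℝ))).2, (fderiv ℝ y p ((0:ℝ), (1:ℝ))).2]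

lemma gradMat_ytunnel (σ : ℝ) (p : ℝ × ℝ) :
    gradMat (ytunnel σ) p =
      !![((p.2 - 1/2 + 1/σ) * σ) * Real.cos (σ * p.1), Real.sin (σ * p.1);
         -(((p.2 - 1/2 + 1/σ) * σ) * Real.sin (σ * p.1)), Real.cos (σ * p.1)] := by
  have h1 : HasFDerivAt (fun q : ℝ × ℝ => q.2 - 1/2 + 1/σ)
      (ContinuousLinearMap.snd ℝ ℝ ℝ) p := by
    simpa using ((hasFDerivAt_snd (𝕜 := ℝ) (E := ℝ) (F := ℝ) (p := p)).sub_const (1/2)).add_const (1/σ)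
  have hg : HasFDerivAt (fun q : ℝ × ℝ => σ * q.1)
      (σ • ContinuousLinearMap.fst ℝ ℝ ℝ) p := by
    simpa using (hasFDerivAt_fst (𝕜 := ℝ) (E := ℝ) (F := ℝ) (p := p)).const_mul σ
  have hs := (Real.hasDerivAt_sin (σ * p.1)).comp_hasFDerivAt p hg
  have hc := (Real.hasDerivAt_cos (σ * p.1)).comp_hasFDerivAt p hg
  have hy : HasFDerivAt (ytunnel σ)
      (((p.2 - 1/2 + 1/σ) • (Real.cos (σ * p.1) • σ • ContinuousLinearMap.fst ℝ ℝ ℝ) +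
        Real.sin (σ * p.1) • ContinuousLinearMap.snd ℝ ℝ ℝ).prod
       ((p.2 - 1/2 + 1/σ) • (-Real.sin (σ * p.1) • σ • ContinuousLinearMap.fst ℝ ℝ ℝ) +
        Real.cos (σ * p.1) • ContinuousLinearMap.snd ℝ ℝ ℝ)) p := (h1.mul hs).prodMk (h1.mul hc)
  rw [gradMat, hy.fderiv]
  ext i j
  fin_cases i <;> fin_cases j <;>
    simp [ContinuousLinearMap.prod_apply] <;> ring

lemma distSO_form (c φ : ℝ) (hc : 1 ≤ c) :
    distSO !![c * Real.cos φ, Real.sin φ; -(c * Real.sin φ), Real.cos φ] = c - 1 := by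
  set F : Matrix (Fin 2) (Fin 2) ℝ :=
    !![c * Real.cos φ, Real.sin φ; -(c * Real.sin φ), Real.cos φ] with hF
  have hsc := Real.sin_sq_add_cos_sq φ
  have hmem : (c - 1) ∈ (fun R => frob (F - R)) '' SOd 2 := by
    refine ⟨!![Real.cos φ, Real.sin φ; -Real.sin φ, Real.cos φ], ⟨?_, ?_⟩, ?_⟩
    · rw [show (!![Real.cos φ, Real.sin φ; -Real.sin φ, Real.cos φ] : Matrix (Fin 2) (Fin 2) ℝ).transpose
          = !![Real.cos φ, -Real.sin φ; Real.sin φ, Real.cos φ] from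
        (Matrix.transposeᵣ_eq _).symm]
      ext i j
      fin_cases i <;> fin_cases j <;>
        simp [Matrix.mul_apply, Fin.sum_univ_two, Matrix.one_apply] <;> nlinarith
    · simp [Matrix.det_fin_two]; nlinarith
    · show frob (F - !![Real.cos φ, Real.sin φ; -Real.sin φ, Real.cos φ]) = c - 1
      have h2 : F - !![Real.cos φ, Real.sin φ; -Real.sin φ, Real.cos φ] =
        !![(c-1) * Real.cos φ, 0; -((c-1) * Real.sin φ), 0] := by
        ext i j; fin_cases i <;> fin_cases j <;> simp [hF] <;> ring
      rw [h2, frob]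
      rw [show ∑ i, ∑ j, ((!![(c-1) * Real.cos φ, 0; -((c-1) * Real.sin φ), 0] : Matrix (Fin 2) (Fin 2) ℝ) i j)^2 = (c-1)^2 by
        simp [Fin.sum_univ_two]; nlinarith]
      exact Real.sqrt_sq (by linarith)
  have hlb : ∀ x ∈ (fun R => frob (F - R)) '' SOd 2, c - 1 ≤ x := by
    rintro x ⟨R, ⟨hR1, hR2⟩, rfl⟩
    have e00 := congrFun (congrFun hR1 0) 0
    have e01 := congrFun (congrFun hR1 0) 1
    have e11 := congrFun (congrFun hR1 1) 1
    simp [Matrix.mul_apply, Fin.sum_univ_two, Matrix.one_apply, Matrix.transpose_apply] at e00 e01 e11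
    rw [Matrix.det_fin_two] at hR2
    set a := R 0 0; set b := R 1 0; set u := R 0 1; set v := R 1 1
    have hu : u = -b := by linear_combination -u*e00 - b*hR2 + a*e01
    have hv : v = a := by linear_combination -v*e00 + a*hR2 + b*e01
    have ht : Real.cos φ * a - Real.sin φ * b ≤ 1 := by
      nlinarith [sq_nonneg (Real.cos φ * b + Real.sin φ * a)]
    have hsum : (c-1)^2 ≤ ∑ i, ∑ j, ((F - R) i j)^2 := by
      have hexp : ∑ i, ∑ j, ((F - R) i j)^2 =
          (c * Real.cos φ - a)^2 + (Real.sin φ - u)^2 +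
          ((-(c * Real.sin φ) - b)^2 + (Real.cos φ - v)^2) := by
        simp [Fin.sum_univ_two, hF]; rfl
      rw [hexp, hu, hv]
      nlinarith [ht]
    calc c - 1 = Real.sqrt ((c-1)^2) := (Real.sqrt_sq (by linarith)).symm
    _ ≤ _ := Real.sqrt_le_sqrt hsum
  exact le_antisymm (csInf_le ⟨c - 1, hlb⟩ hmem) (le_csInf ⟨_, hmem⟩ hlb)

lemma distSO_sq_ytunnel (σ : ℝ) (hσ : 0 < σ) (p : ℝ × ℝ) (hp : 1/2 ≤ p.2) :
    (distSO (gradMat (ytunnel σ) p))^2 = σ^2 * (p.2 - 1/2)^2 := by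
  have hc : (1:ℝ) ≤ (p.2 - 1/2 + 1/σ) * σ := by
    have : (p.2 - 1/2 + 1/σ) * σ = σ * (p.2 - 1/2) + 1 := by
      field_simp
    rw [this]
    nlinarith
  rw [gradMat_ytunnel, distSO_form _ _ hc]
  have : (p.2 - 1/2 + 1/σ) * σ - 1 = σ * (p.2 - 1/2) := by
    field_simp; ring
  rw [this]; ring

/-- For the thin-tunnel deformation on `(0,1)×(1/2,1/2+δ)` one has
`dist²(∇y(x), SO(2)) = σ²(x₂ − 1/2)²` pointwise, and
`∫ dist²(∇y, SO(2)) dx = σ²δ³/3`. -/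
theorem thin_tunnel_energy (δ σ : ℝ) (hδ : 0 < δ) (hσ : σ ∈ Set.Ioo 0 (π/2)) :
    (∀ p ∈ Set.Ioo (0:ℝ) 1 ×ˢ Set.Ioo (1/2 : ℝ) (1/2 + δ),
        (distSO (gradMat (ytunnel σ) p))^2 = σ^2 * (p.2 - 1/2)^2) ∧
    ∫ p in Set.Ioo (0:ℝ) 1 ×ˢ Set.Ioo (1/2 : ℝ) (1/2 + δ),
        (distSO (gradMat (ytunnel σ) p))^2 = σ^2 * δ^3 / 3 := by
  obtain ⟨hσ0, -⟩ := hσ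
  have hpt : ∀ p ∈ Set.Ioo (0:ℝ) 1 ×ˢ Set.Ioo (1/2 : ℝ) (1/2 + δ),
      (distSO (gradMat (ytunnel σ) p))^2 = σ^2 * (p.2 - 1/2)^2 := fun p hp =>
    distSO_sq_ytunnel σ hσ0 p (le_of_lt hp.2.1)
  refine ⟨hpt, ?_⟩
  have hmeas : MeasurableSet (Set.Ioo (0:ℝ) 1 ×ˢ Set.Ioo (1/2 : ℝ) (1/2 + δ)) :=
    measurableSet_Ioo.prod measurableSet_Ioo
  rw [setIntegral_congr_fun hmeas hpt]
  have hg : Continuous (fun p : ℝ × ℝ => σ^2 * (p.2 - 1/2)^2) := by continuity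
  have hint : IntegrableOn (fun p : ℝ × ℝ => σ^2 * (p.2 - 1/2)^2)
      (Set.Ioo (0:ℝ) 1 ×ˢ Set.Ioo (1/2 : ℝ) (1/2 + δ)) := by
    refine (hg.continuousOn.integrableOn_compact
      ((isCompact_Icc (a := (0:ℝ)) (b := 1)).prod
       (isCompact_Icc (a := (1/2:ℝ)) (b := 1/2 + δ)))).mono_set ?_
    exact Set.prod_mono Set.Ioo_subset_Icc_self Set.Ioo_subset_Icc_self
  rw [show (volume : Measure (ℝ × ℝ)) = (volume : Measure ℝ).prod volume from
    Measure.volume_eq_prod ℝ ℝ]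
  rw [setIntegral_prod _ (by rwa [← Measure.volume_eq_prod])]
  have hinner : (∫ y in Set.Ioo (1/2 : ℝ) (1/2 + δ), σ^2 * (y - 1/2)^2)
      = σ^2 * δ^3 / 3 := by
    rw [← integral_Ioc_eq_integral_Ioo,
      ← intervalIntegral.integral_of_le (by linarith : (1/2:ℝ) ≤ 1/2 + δ)]
    rw [intervalIntegral.integral_const_mul]
    have := intervalIntegral.integral_comp_sub_right (a := (1/2:ℝ)) (b := 1/2 + δ)
      (fun u => u^2) (1/2)
    rw [this]
    norm_num [integral_pow]
    ring
  simp only [hinner, MeasureTheory.setIntegral_const, Real.volume_Ioo]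
  simp
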